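/- Approximation rate for smoothly parameterized networks: if S = {f(·,y) : y ∈ [0,1]^k} with ‖f(·,y) − f(·,y')‖ ≤ ‖y − y'‖ for all y, y', and K = c̄o(S), then c_n(K) ≤ C·n^{−1/k} for all n ≥ 1 (with C an absolute constant depending only on the grid covering, e.g. C = 1 when N(ε,S) ≤ ε^{−k}). -/

import Mathlib

open Metric Set Filter
open scoped ENNReal

variable {X : Type*} [NormedAddCommGroup X] [NormedSpace ℝ X]

/-- `co_n(S)`: convex-type combinations of `n` elements of `S` with ℓ¹ norm of
coefficients at most 1. -/
def convComb (n : ℕ) (S : Set X) : Set X :=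
  {x | ∃ (l : Fin n → ℝ) (s : Fin n → X),
    (∑ i, |l i|) ≤ 1 ∧ (∀ i, s i ∈ S) ∧ x = ∑ i, l i • s i}

/-- `c̄o(S)`: elements approximable by `co_n(S)` as `n → ∞`. -/
def cobar (S : Set X) : Set X :=
  {f | Tendsto (fun n => infDist f (convComb n S)) atTop (nhds 0)}

/-- The convex `n`-width of `K`. -/
noncomputable def cwidth (n : ℕ) (K : Set X) : ℝ≥0∞ :=
  ⨅ φ : Fin n → X, ⨆ f ∈ K, EMetric.infEdist f (convComb n (Set.range φ))

/-- Minimal `ε`-covering number of `S` by points of `X` (∞ if none exists). -/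
noncomputable def coverN (ε : ℝ) (S : Set X) : ℕ∞ :=
  ⨅ (T : Finset X) (_ : ∀ s ∈ S, ∃ t ∈ T, dist s t ≤ ε), (T.card : ℕ∞)

/-- `N_co(ε, K)`: minimal covering number of a set whose `c̄o` contains `K`. -/
noncomputable def Ncov (ε : ℝ) (K : Set X) : ℕ∞ :=
  ⨅ (S : Set X) (_ : K ⊆ cobar S), coverN ε S

lemma convComb_nonempty {S : Set X} (hS : S.Nonempty) (m : ℕ) :
    (convComb m S).Nonempty := by
  obtain ⟨s0, hs0⟩ := hS
  exact ⟨0, 0, fun _ => s0, by simp, fun _ => hs0, by simp⟩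

lemma merge_mem {n m : ℕ} (φ : Fin n → X) (l : Fin m → ℝ) (g : Fin m → Fin n)
    (hl : (∑ i, |l i|) ≤ 1) : (∑ i, l i • φ (g i)) ∈ convComb n (Set.range φ) := by
  classical
  refine ⟨fun j => ∑ i ∈ Finset.univ.filter (fun i => g i = j), l i, φ, ?_, fun j => ⟨j, rfl⟩, ?_⟩
  · calc ∑ j, |∑ i ∈ Finset.univ.filter (fun i => g i = j), l i|
        ≤ ∑ j, ∑ i ∈ Finset.univ.filter (fun i => g i = j), |l i| :=
          Finset.sum_le_sum fun j _ => Finset.abs_sum_le_sum_abs _ _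
      _ = ∑ i, |l i| := by
          rw [Finset.sum_fiberwise_eq_sum_filter]
          simp
      _ ≤ 1 := hl
  · rw [← Finset.sum_fiberwise_of_maps_to (fun i _ => Finset.mem_univ (g i))
        (fun i => l i • φ (g i))]
    refine Finset.sum_congr rfl fun j _ => ?_
    rw [Finset.sum_smul]
    refine Finset.sum_congr rfl fun i hi => ?_
    rw [(Finset.mem_filter.1 hi).2]

lemma approx_key {n : ℕ} {S : Set X} (hS : S.Nonempty) (φ : Fin n → X) {ε : ℝ} (hε : 0 ≤ ε)
    (hnet : ∀ s ∈ S, ∃ j, dist s (φ j) ≤ ε) {f : X} (hf : f ∈ cobar S) :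
    EMetric.infEdist f (convComb n (Set.range φ)) ≤ ENNReal.ofReal ε := by
  refine ENNReal.le_of_forall_pos_le_add fun δ hδ _ => ?_
  -- find m and x ∈ convComb m S with dist f x < δ
  have hf' : Tendsto (fun m => infDist f (convComb m S)) atTop (nhds 0) := hf
  obtain ⟨m, hm⟩ := (hf'.eventually (eventually_lt_nhds hδ)).exists
  obtain ⟨x, hxS, hfx⟩ := (infDist_lt_iff (convComb_nonempty hS m)).1
    (lt_of_le_of_lt (le_abs_self _) (by simpa [abs_of_nonneg (infDist_nonneg)] using hm))
  obtain ⟨l, s, hl, hsS, rfl⟩ := hxS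
  -- replace each s i by a net point
  choose g hg using fun i => hnet (s i) (hsS i)
  set y : X := ∑ i, l i • φ (g i) with hy
  have hyT : y ∈ convComb n (Set.range φ) := merge_mem φ l g hl
  have hdist : dist (∑ i, l i • s i) y ≤ ε := by
    rw [dist_eq_norm, hy, ← Finset.sum_sub_distrib]
    calc ‖∑ i, (l i • s i - l i • φ (g i))‖ ≤ ∑ i, ‖l i • s i - l i • φ (g i)‖ :=
          norm_sum_le _ _
      _ = ∑ i, |l i| * ‖s i - φ (g i)‖ := by
          simp [← smul_sub, norm_smul, Real.norm_eq_abs]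
      _ ≤ ∑ i, |l i| * ε := Finset.sum_le_sum fun i _ =>
          mul_le_mul_of_nonneg_left (by simpa [dist_eq_norm] using hg i) (abs_nonneg _)
      _ = (∑ i, |l i|) * ε := by rw [Finset.sum_mul]
      _ ≤ 1 * ε := mul_le_mul_of_nonneg_right hl hε
      _ = ε := one_mul ε
  have : dist f y ≤ ε + δ := by
    calc dist f y ≤ dist f (∑ i, l i • s i) + dist (∑ i, l i • s i) y := dist_triangle _ _ _
      _ ≤ ε + δ := by
        have := le_of_lt hfx
        linarith
  calc EMetric.infEdist f (convComb n (Set.range φ)) ≤ edist f y :=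
        EMetric.infEdist_le_edist_of_mem hyT
    _ = ENNReal.ofReal (dist f y) := edist_dist f y
    _ ≤ ENNReal.ofReal (ε + δ) := ENNReal.ofReal_le_ofReal this
    _ ≤ ENNReal.ofReal ε + δ := by
        rw [ENNReal.ofReal_add hε (le_of_lt (by exact_mod_cast hδ))]
        gcongr
        simp

lemma grid_net (k m : ℕ) (hm : 1 ≤ m) :
    ∃ net : (Fin k → Fin m) → (Fin k → ℝ),
      (∀ v, net v ∈ Set.Icc (0 : Fin k → ℝ) 1) ∧
      ∀ y ∈ Set.Icc (0 : Fin k → ℝ) 1, ∃ v, ‖y - net v‖ ≤ 1 / (2 * m) := by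
  have hm0 : (0 : ℝ) < m := by exact_mod_cast hm
  refine ⟨fun v i => ((v i : ℝ) + 1/2) / m, ?_, ?_⟩
  · intro v
    constructor <;> intro i
    · have : (0:ℝ) ≤ (v i : ℝ) + 1/2 := by positivity
      exact div_nonneg this hm0.le
    · show ((v i : ℝ) + 1/2) / m ≤ 1
      rw [div_le_one hm0]
      have : (v i : ℝ) ≤ m - 1 := by
        have := v i |>.isLt
        have : (v i : ℝ) < m := by exact_mod_cast this
        have h2 : ((v i : ℝ) + 1) ≤ m := by
          have : ((v i : ℕ) : ℝ) + 1 = (((v i : ℕ) + 1 : ℕ) : ℝ) := by push_cast; ring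
          rw [this]
          exact_mod_cast (v i).isLt
        linarith
      linarith
  · intro y hy
    obtain ⟨hy0, hy1⟩ := hy
    refine ⟨fun i => ⟨min ⌊m * y i⌋₊ (m - 1), lt_of_le_of_lt (min_le_right _ _)
      (Nat.sub_lt hm one_pos)⟩, ?_⟩
    rw [pi_norm_le_iff_of_nonneg (by positivity)]
    intro i
    have hyi0 : 0 ≤ y i := hy0 i
    have hyi1 : y i ≤ 1 := hy1 i
    set a : ℕ := min ⌊m * y i⌋₊ (m - 1) with ha
    have hbound : (a : ℝ) ≤ m * y i ∧ m * y i ≤ (a : ℝ) + 1 := by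
      rcases le_or_gt ⌊m * y i⌋₊ (m - 1) with h | h
      · have haf : a = ⌊m * y i⌋₊ := min_eq_left h
        constructor
        · rw [haf]; exact Nat.floor_le (by positivity)
        · rw [haf]
          exact (Nat.lt_floor_add_one _).le
      · have haf : a = m - 1 := min_eq_right h.le
        have hcast : ((m - 1 : ℕ) : ℝ) = (m : ℝ) - 1 := by
          push_cast [Nat.cast_sub hm]; ring
        constructor
        · rw [haf, hcast]
          have : (m : ℝ) ≤ ⌊m * y i⌋₊ := by
            exact_mod_cast Nat.le_of_lt_succ (by omega : m < ⌊m * y i⌋₊ + 1)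
          have hfl : (⌊m * y i⌋₊ : ℝ) ≤ m * y i := Nat.floor_le (by positivity)
          linarith
        · rw [haf, hcast]
          nlinarith
      
    have : |m * y i - ((a : ℝ) + 1/2)| ≤ 1/2 :=
      abs_le.2 ⟨by linarith [hbound.1, hbound.2], by linarith [hbound.1, hbound.2]⟩
    have heq : y i - ((a : ℝ) + 1/2) / m = (m * y i - ((a : ℝ) + 1/2)) / m := by
      field_simp
    simp only [Pi.sub_apply, Real.norm_eq_abs]
    rw [heq, abs_div, abs_of_pos hm0]
    rw [div_le_div_iff₀ hm0 (by positivity)]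
    nlinarith [this]

lemma cwidth_le_of_net {n : ℕ} {S K : Set X} (hS : S.Nonempty) (hK : K = cobar S)
    (φ : Fin n → X) {ε : ℝ} (hε : 0 ≤ ε) (hnet : ∀ s ∈ S, ∃ j, dist s (φ j) ≤ ε) :
    cwidth n K ≤ ENNReal.ofReal ε :=
  (iInf_le _ φ).trans (iSup₂_le fun f hf => approx_key hS φ hε hnet (hK ▸ hf))

lemma cwidth_le_eps (k : ℕ) (F : (Fin k → ℝ) → X)
    (hF : ∀ y ∈ Set.Icc (0 : Fin k → ℝ) 1, ∀ y' ∈ Set.Icc (0 : Fin k → ℝ) 1,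
      ‖F y - F y'‖ ≤ ‖y - y'‖)
    (K : Set X) (hK : K = cobar (F '' Set.Icc (0 : Fin k → ℝ) 1))
    (n m : ℕ) (hm : 1 ≤ m) (hmn : m ^ k ≤ n) :
    cwidth n K ≤ ENNReal.ofReal (1 / (2 * m)) := by
  obtain ⟨net, hnetIcc, hnetcov⟩ := grid_net k m hm
  have hSne : (F '' Set.Icc (0 : Fin k → ℝ) 1).Nonempty :=
    ⟨F 0, Set.mem_image_of_mem F ⟨le_refl _, fun i => zero_le_one⟩⟩
  have hpow : 0 < m ^ k := Nat.pow_pos hm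
  let e : (Fin k → Fin m) ≃ Fin (m ^ k) := finFunctionFinEquiv
  let φ : Fin n → X := fun j => F (net (e.symm ⟨j.val % m ^ k, Nat.mod_lt _ hpow⟩))
  refine cwidth_le_of_net hSne hK φ (by positivity) ?_
  rintro s ⟨y, hy, rfl⟩
  obtain ⟨v, hv⟩ := hnetcov y hy
  refine ⟨⟨(e v).val, lt_of_lt_of_le (e v).isLt hmn⟩, ?_⟩
  have : φ ⟨(e v).val, lt_of_lt_of_le (e v).isLt hmn⟩ = F (net v) := by
    simp only [φ]
    have h1 : (⟨(e v).val % m ^ k, Nat.mod_lt _ hpow⟩ : Fin (m ^ k)) = e v :=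
      Fin.ext (Nat.mod_eq_of_lt (e v).isLt)
    rw [h1, Equiv.symm_apply_apply]
  rw [this, dist_eq_norm]
  exact (hF y hy (net v) (hnetIcc v)).trans hv

theorem stmt17 [CompleteSpace X] (k : ℕ) (F : (Fin k → ℝ) → X)
    (hF : ∀ y ∈ Set.Icc (0 : Fin k → ℝ) 1, ∀ y' ∈ Set.Icc (0 : Fin k → ℝ) 1,
      ‖F y - F y'‖ ≤ ‖y - y'‖)
    (K : Set X) (hK : K = cobar (F '' Set.Icc (0 : Fin k → ℝ) 1)) :
    ∃ C : ℝ, 0 < C ∧ ∀ n : ℕ, 1 ≤ n →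
      cwidth n K ≤ ENNReal.ofReal (C * (n : ℝ) ^ (-(1 : ℝ) / k)) := by
  refine ⟨1, one_pos, fun n hn => ?_⟩
  rcases Nat.eq_zero_or_pos k with hk | hk
  · subst hk
    have h1 : cwidth n K ≤ ENNReal.ofReal (1 / (2 * (1:ℕ))) :=
      cwidth_le_eps 0 F hF K hK n 1 le_rfl (by simpa using hn)
    refine h1.trans (ENNReal.ofReal_le_ofReal ?_)
    norm_num
  · have hn1 : (1:ℝ) ≤ (n:ℝ) := by exact_mod_cast hn
    have hk0 : (k:ℝ) ≠ 0 := by positivity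
    set x : ℝ := (n:ℝ) ^ ((1:ℝ)/k) with hx
    have hx1 : 1 ≤ x := Real.one_le_rpow hn1 (by positivity)
    set m : ℕ := ⌊x⌋₊ with hmdef
    have hm : 1 ≤ m := Nat.le_floor (by exact_mod_cast hx1)
    have hmx : (m:ℝ) ≤ x := Nat.floor_le (by linarith)
    have hxk : x ^ k = (n:ℝ) := by
      rw [hx, ← Real.rpow_natCast ((n:ℝ) ^ ((1:ℝ)/k)) k, ← Real.rpow_mul (by linarith)]
      rw [one_div_mul_cancel hk0, Real.rpow_one]
    have hmn : m ^ k ≤ n := by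
      have : ((m ^ k : ℕ) : ℝ) ≤ (n:ℝ) := by
        push_cast
        calc (m:ℝ) ^ k ≤ x ^ k := pow_le_pow_left₀ (by positivity) hmx k
          _ = n := hxk
      exact_mod_cast this
    have h1 : cwidth n K ≤ ENNReal.ofReal (1 / (2 * m)) :=
      cwidth_le_eps k F hF K hK n m hm hmn
    refine h1.trans (ENNReal.ofReal_le_ofReal ?_)
    rw [one_mul]
    have hneg : (n:ℝ) ^ (-(1:ℝ)/k) = 1 / x := by
      rw [neg_div, Real.rpow_neg (by linarith), hx]
      simp [one_div]
    rw [hneg]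
    have hx2m : x ≤ 2 * m := by
      have := Nat.lt_floor_add_one x
      have hm1 : (1:ℝ) ≤ (m:ℝ) := by exact_mod_cast hm
      push_cast at this ⊢
      linarith
    exact one_div_le_one_div_of_le (by linarith) hx2m
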